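/- Let A be a unital C*-algebra and let P, Q ∈ A be orthogonal projections (P² = P = P*, Q² = Q = Q*). If 1 does not belong to the spectrum of (P − Q)², then there exists a selfadjoint unitary V ∈ A (V = V*, V² = 1) such that V P V* = Q and V Q V* = P. -/

import Mathlib

open StarAlgebra in
lemma my_commute_mem_elemental {A : Type*} [CStarAlgebra A] {a x y : A}
    (hx : Commute x a) (hxs : Commute x (star a)) (hy : y ∈ elemental ℂ a) :
    Commute x y := by
  induction hy using StarAlgebra.elemental.induction_on with
  | self => exact hx
  | star_self => exact hxs
  | algebraMap r => exact (Algebra.commutes r x).symm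
  | add u hu v hv hu' hv' => exact hu'.add_right hv'
  | mul u hu v hv hu' hv' => exact hu'.mul_right hv'
  | closure s hs hcomm v hv =>
      have hclosed : IsClosed {z : A | Commute x z} :=
        isClosed_eq (by fun_prop) (by fun_prop)
      exact closure_minimal (fun u hu => hcomm u hu) hclosed hv

lemma my_commute_cfc {A : Type*} [CStarAlgebra A] {a x : A} (ha : IsSelfAdjoint a)
    (hx : Commute x a) (f : ℝ → ℝ) : Commute x (cfc f a) := by
  rw [cfc_real_eq_complex f ha]
  refine cfc_cases (fun y => Commute x y) a _ (Commute.zero_right x) fun hf han => ?_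
  rw [cfcHom_eq_of_isStarNormal]
  exact my_commute_mem_elemental hx (ha.star_eq.symm ▸ hx) (SetLike.coe_mem _)

theorem stmt_17 {A : Type*} [NormedRing A] [StarRing A] [CStarRing A]
    [NormedAlgebra ℂ A] [StarModule ℂ A] [CompleteSpace A]
    (P Q : A) (hP : P ^ 2 = P) (hPs : star P = P) (hQ : Q ^ 2 = Q) (hQs : star Q = Q)
    (hspec : (1 : ℂ) ∉ spectrum ℂ ((P - Q) ^ 2)) :
    ∃ V : A, star V = V ∧ V ^ 2 = 1 ∧ V * star V = 1 ∧ star V * V = 1 ∧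
      V * P * star V = Q ∧ V * Q * star V = P := by
  letI : CStarAlgebra A := ⟨⟩
  have hP2 : P * P = P := by rw [← sq]; exact hP
  have hQ2 : Q * Q = Q := by rw [← sq]; exact hQ
  set C : A := P + Q - 1 with hCdef
  set a : A := C * C with hadef
  have hCs : star C = C := by simp [hCdef, hPs, hQs]
  have hCsa : IsSelfAdjoint C := hCs
  have ha : a = 1 - (P - Q) ^ 2 := by
    simp only [hadef, hCdef, sq, mul_sub, sub_mul, mul_add, add_mul, mul_one, one_mul,
      hP2, hQ2]
    abel
  have hasa : IsSelfAdjoint a := by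
    rw [hadef]; nth_rewrite 1 [← hCs]; exact IsSelfAdjoint.star_mul_self C
  have hCPC : C * P * C = Q * a := by
    simp only [hadef, hCdef, mul_sub, sub_mul, mul_add, add_mul, mul_one, one_mul,
      hP2, hQ2, mul_assoc]
    simp only [hP2, hQ2, ← mul_assoc, hP2, hQ2]
    simp only [mul_assoc, hP2, hQ2]
    abel
  have hCQC : C * Q * C = P * a := by
    simp only [hadef, hCdef, mul_sub, sub_mul, mul_add, add_mul, mul_one, one_mul,
      hP2, hQ2, mul_assoc]
    simp only [hP2, hQ2, ← mul_assoc, hP2, hQ2]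
    simp only [mul_assoc, hP2, hQ2]
    abel
  have hPa : Commute P a := by
    have h : P * a = P * Q * P ∧ a * P = P * Q * P := by
      constructor <;>
      · simp only [hadef, hCdef, mul_sub, sub_mul, mul_add, add_mul, mul_one, one_mul,
          hP2, hQ2, mul_assoc]
        simp only [← mul_assoc, hP2, hQ2]
        simp only [mul_assoc, hP2, hQ2]
        abel
    exact h.1.trans h.2.symm
  have hQa : Commute Q a := by
    have h : Q * a = Q * P * Q ∧ a * Q = Q * P * Q := by
      constructor <;>
      · simp only [hadef, hCdef, mul_sub, sub_mul, mul_add, add_mul, mul_one, one_mul,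
          hP2, hQ2, mul_assoc]
        simp only [← mul_assoc, hP2, hQ2]
        simp only [mul_assoc, hP2, hQ2]
        abel
    exact h.1.trans h.2.symm
  have hCa : Commute C a := by rw [hadef]; exact (Commute.refl C).mul_right (Commute.refl C)
  have hUnit : IsUnit a := by
    rw [spectrum.notMem_iff] at hspec
    rw [ha]
    simpa [Algebra.algebraMap_eq_smul_one] using hspec
  have hspec_pos : ∀ x ∈ spectrum ℝ a, 0 < x := by
    intro x hx
    have hx0 : 0 ≤ x :=
      spectrum_star_mul_self_nonneg x (show x ∈ spectrum ℝ (star C * C) by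
        rw [hCs, ← hadef]; exact hx)
    rcases lt_or_eq_of_le hx0 with h | h
    · exact h
    · exact absurd (h ▸ hx) (fun h0 => (spectrum.zero_mem_iff ℝ).mp h0 hUnit)
  set f : ℝ → ℝ := fun x => (Real.sqrt x)⁻¹ with hfdef
  have hfc : ContinuousOn f (spectrum ℝ a) := by
    apply ContinuousOn.inv₀
    · exact Real.continuous_sqrt.continuousOn
    · exact fun x hx => ne_of_gt (Real.sqrt_pos.mpr (hspec_pos x hx))
  set T : A := cfc f a with hTdef
  have hTs : IsSelfAdjoint T := cfc_predicate f a
  have hTT : T * T * a = 1 := by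
    rw [hTdef, ← cfc_mul f f a hfc hfc]
    nth_rewrite 2 [← cfc_id ℝ a hasa]
    rw [← cfc_mul (fun x => f x * f x) id a (hfc.mul hfc) continuousOn_id]
    rw [← cfc_const_one ℝ a hasa]
    apply cfc_congr
    intro x hx
    have hx0 := hspec_pos x hx
    have hs0 : Real.sqrt x ≠ 0 := ne_of_gt (Real.sqrt_pos.mpr hx0)
    show (Real.sqrt x)⁻¹ * (Real.sqrt x)⁻¹ * x = 1
    rw [← mul_inv, Real.mul_self_sqrt hx0.le]
    exact inv_mul_cancel₀ hx0.ne'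
  have hTa : Commute T a := (my_commute_cfc hasa (Commute.refl a) f).symm
  have haTT : a * (T * T) = 1 := (hTa.mul_left hTa).symm.eq.trans hTT
  have hTC : Commute T C := (my_commute_cfc hasa hCa f).symm
  have hTP : Commute T P := (my_commute_cfc hasa hPa f).symm
  have hTQ : Commute T Q := (my_commute_cfc hasa hQa f).symm
  have hVs : star (C * T) = C * T := by
    rw [star_mul, hTs.star_eq, hCs]; exact hTC.eq
  have conj : ∀ X Y : A, Commute T X → C * X * C = Y * a → C * T * X * (C * T) = Y := by
    intro X Y hTX hXY
    have key : C * T * X * (C * T) = C * X * C * (T * T) := by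
      simp only [mul_assoc]
      congr 1
      rw [← mul_assoc T X, hTX.eq, mul_assoc, ← mul_assoc T C, hTC.eq, mul_assoc]
    rw [key, hXY, mul_assoc, haTT, mul_one]
  have hV2 : C * T * (C * T) = 1 := by
    have : C * T * (C * T) = C * C * (T * T) := by
      simp only [mul_assoc]
      congr 1
      rw [← mul_assoc T C, hTC.eq, mul_assoc]
    rw [this, ← hadef, haTT]
  refine ⟨C * T, hVs, by rw [sq]; exact hV2, by rw [hVs]; exact hV2, by rw [hVs]; exact hV2,
    ?_, ?_⟩
  · rw [hVs]; exact conj P Q hTP hCPC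
  · rw [hVs]; exact conj Q P hTQ hCQC
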